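/- Let χ₂ be a Dirichlet character modulo q₂, q₁ a positive integer, W = lcm(q₁, q₂), and n₁ a unit modulo q₁. Let χ̃₂ (mod q̃₂) be the primitive character inducing χ₂. Then Σ over units b mod W with b ≡ inv(n₁) (mod q₁) of χ₂(b) equals (φ(q₂)/φ(gcd(q₁,q₂)))·χ̃₂(inv(n₁)) if q̃₂ divides gcd(q₁, q₂), and equals 0 otherwise. -/

import Mathlib

open scoped Classical
open DirichletCharacter

lemma crt_lift {n d₁ d₂ : ℕ} [NeZero n] (h₁ : d₁ ∣ n) (h₂ : d₂ ∣ n) (u : (ZMod d₂)ˣ)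
    (hg : ZMod.unitsMap (Nat.gcd_dvd_right d₁ d₂) u = 1) :
    ∃ v : (ZMod n)ˣ, ZMod.unitsMap h₁ v = 1 ∧ ZMod.unitsMap h₂ v = u := by
  have hd₂ : NeZero d₂ := ⟨fun h => NeZero.ne n (by simpa [h] using h₂)⟩
  have hd₁ : NeZero d₁ := ⟨fun h => NeZero.ne n (by simpa [h] using h₁)⟩
  set a : ℕ := (u : ZMod d₂).val with ha_def
  have ha : ((a : ℕ) : ZMod d₂) = (u : ZMod d₂) := by
    simp [ha_def, ZMod.natCast_val, ZMod.cast_id]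
  have hg' : ((a : ℕ) : ZMod (Nat.gcd d₁ d₂)) = ((1 : ℕ) : ZMod (Nat.gcd d₁ d₂)) := by
    have := congrArg (Units.val) hg
    rw [ZMod.unitsMap_def] at this
    simp only [Units.coe_map, Units.val_one, MonoidHom.coe_coe] at this
    rw [← ha, map_natCast] at this
    simpa using this
  have hmod : a ≡ 1 [MOD Nat.gcd d₂ d₁] := by
    rw [Nat.gcd_comm]
    exact (ZMod.natCast_eq_natCast_iff _ _ _).mp hg'
  obtain ⟨k, hk₂, hk₁⟩ := Nat.chineseRemainder' hmod
  have hau : Nat.Coprime a d₂ := ZMod.val_coe_unit_coprime u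
  have hcop₂ : Nat.Coprime k d₂ := by unfold Nat.Coprime; rw [hk₂.gcd_eq]; exact hau
  have hcop₁ : Nat.Coprime k d₁ := by unfold Nat.Coprime; rw [hk₁.gcd_eq]; simp
  have hkl : Nat.Coprime k (Nat.lcm d₁ d₂) :=
    Nat.Coprime.coprime_dvd_right (Nat.lcm_dvd (dvd_mul_right _ _) (dvd_mul_left _ _))
      (hcop₁.mul_right hcop₂)
  have hlcm : Nat.lcm d₁ d₂ ∣ n := Nat.lcm_dvd h₁ h₂
  have : NeZero (Nat.lcm d₁ d₂) := ⟨fun h => NeZero.ne n (by simpa [h] using hlcm)⟩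
  obtain ⟨v, hv⟩ := ZMod.unitsMap_surjective hlcm (ZMod.unitOfCoprime k hkl)
  have key : ∀ (d : ℕ) (hd : d ∣ Nat.lcm d₁ d₂),
      ((ZMod.unitsMap (hd.trans hlcm) v : (ZMod d)ˣ) : ZMod d) = ((k : ℕ) : ZMod d) := by
    intro d hd
    have hcomp : ZMod.unitsMap (hd.trans hlcm) v = ZMod.unitsMap hd (ZMod.unitsMap hlcm v) := by
      rw [← ZMod.unitsMap_comp]; rfl
    rw [hcomp, hv]
    rw [ZMod.unitsMap_def]
    simp only [Units.coe_map, ZMod.coe_unitOfCoprime]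
    simp [map_natCast]
  refine ⟨v, ?_, ?_⟩
  · have := key d₁ (Nat.dvd_lcm_left d₁ d₂)
    apply Units.ext
    have h1 : ((k : ℕ) : ZMod d₁) = ((1:ℕ) : ZMod d₁) := (ZMod.natCast_eq_natCast_iff _ _ _).mpr hk₁
    rw [show ZMod.unitsMap h₁ v = ZMod.unitsMap ((Nat.dvd_lcm_left d₁ d₂).trans hlcm) v from rfl,
      this, h1]
    simp
  · have := key d₂ (Nat.dvd_lcm_right d₁ d₂)
    apply Units.ext
    have h2 : ((k : ℕ) : ZMod d₂) = ((a : ℕ) : ZMod d₂) := (ZMod.natCast_eq_natCast_iff _ _ _).mpr hk₂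
    rw [show ZMod.unitsMap h₂ v = ZMod.unitsMap ((Nat.dvd_lcm_right d₁ d₂).trans hlcm) v from rfl,
      this, h2, ha]

lemma my_eq_changeLevel {n : ℕ} (χ : DirichletCharacter ℂ n) :
    χ = changeLevel (conductor_dvd_level χ) χ.primitiveCharacter :=
  Classical.choose_spec (factorsThrough_conductor χ).choose_spec

lemma conductor_dvd_of_factorsThrough {n : ℕ} [NeZero n] {χ : DirichletCharacter ℂ n} {d : ℕ}
    (h : FactorsThrough χ d) : χ.conductor ∣ d := by
  have hd : d ∣ n := h.dvd
  have hgn : Nat.gcd χ.conductor d ∣ n := (Nat.gcd_dvd_right _ _).trans hd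
  have hft : FactorsThrough χ (Nat.gcd χ.conductor d) := by
    rw [factorsThrough_iff_ker_unitsMap hgn]
    intro u hu
    rw [MonoidHom.mem_ker] at hu
    obtain ⟨v, hv1, hv2⟩ := crt_lift (conductor_dvd_level χ) hd (ZMod.unitsMap hd u)
      (by rw [← MonoidHom.comp_apply, ZMod.unitsMap_comp]; exact hu)
    have hw : ZMod.unitsMap hd (v⁻¹ * u) = 1 := by
      rw [map_mul, map_inv, hv2]; simp
    have huvw : u = v * (v⁻¹ * u) := by group
    rw [MonoidHom.mem_ker, huvw, map_mul]
    have e1 : χ.toUnitHom v = 1 :=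
      (factorsThrough_iff_ker_unitsMap (conductor_dvd_level χ)).mp (factorsThrough_conductor χ)
        (by rwa [MonoidHom.mem_ker])
    have e2 : χ.toUnitHom (v⁻¹ * u) = 1 :=
      (factorsThrough_iff_ker_unitsMap hd).mp h (by rwa [MonoidHom.mem_ker])
    rw [e1, e2, mul_one]
  have hle : χ.conductor ≤ Nat.gcd χ.conductor d := Nat.sInf_le hft
  have hge : Nat.gcd χ.conductor d ≤ χ.conductor :=
    Nat.le_of_dvd (Nat.pos_of_ne_zero (conductor_ne_zero χ)) (Nat.gcd_dvd_left _ _)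
  have : χ.conductor = Nat.gcd χ.conductor d := le_antisymm hle hge
  exact this ▸ Nat.gcd_dvd_right _ _

lemma tot_lcm_gcd (a b : ℕ) (ha : a ≠ 0) (hb : b ≠ 0) :
    Nat.totient (Nat.lcm a b) * Nat.totient (Nat.gcd a b) = a.totient * b.totient := by
  have h1 := Nat.totient_gcd_mul_totient_mul a b
  have h2 := Nat.totient_gcd_mul_totient_mul (Nat.lcm a b) (Nat.gcd a b)
  have hg : Nat.gcd (Nat.lcm a b) (Nat.gcd a b) = Nat.gcd a b :=
    Nat.gcd_eq_right ((Nat.gcd_dvd_left a b).trans (Nat.dvd_lcm_left a b))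
  have hm : Nat.lcm a b * Nat.gcd a b = a * b := by
    rw [mul_comm]; exact Nat.gcd_mul_lcm a b
  rw [hg, hm] at h2
  have hgpos : 0 < Nat.gcd a b := Nat.gcd_pos_of_pos_left _ (Nat.pos_of_ne_zero ha)
  exact Nat.eq_of_mul_eq_mul_right hgpos (h2.symm.trans h1)

lemma fiber_card {G H : Type*} [Group G] [Group H] [Fintype G] [Fintype H]
    [DecidableEq H] (f : G →* H) (hf : Function.Surjective f) (y : H) :
    (Finset.univ.filter fun g => f g = y).card * Fintype.card H = Fintype.card G := by
  classical
  have key : ∀ z : H, (Finset.univ.filter fun g => f g = z).card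
      = (Finset.univ.filter fun g => f g = 1).card := by
    intro z
    obtain ⟨g₀, hg₀⟩ := hf z
    apply Finset.card_nbij' (fun g => g₀⁻¹ * g) (fun g => g₀ * g)
    · intro a ha
      simp only [Finset.mem_coe, Finset.coe_filter, Finset.mem_filter, Finset.mem_univ, true_and, Set.mem_setOf_eq] at ha ⊢
      rw [map_mul, map_inv, hg₀, ha, inv_mul_cancel]
    · intro a ha
      simp only [Finset.mem_coe, Finset.coe_filter, Finset.mem_filter, Finset.mem_univ, true_and, Set.mem_setOf_eq] at ha ⊢
      rw [map_mul, hg₀, ha, mul_one]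
    · intro a _; group
    · intro a _; group
  have hsum : ∑ z : H, (Finset.univ.filter fun g => f g = z).card = Fintype.card G := by
    rw [← Finset.card_univ,
      Finset.card_eq_sum_card_fiberwise (f := f) (fun x _ => Finset.mem_univ _)]
  calc (Finset.univ.filter fun g => f g = y).card * Fintype.card H
      = ∑ z : H, (Finset.univ.filter fun g => f g = z).card := by
        simp [key, Finset.sum_const, Finset.card_univ, mul_comm, key y]
    _ = Fintype.card G := hsum


/-- Let `χ₂` be a Dirichlet character mod `q₂`, `W = lcm(q₁, q₂)`, `n₁` a unit mod
`q₁`, and `χ̃₂ mod q̃₂` the primitive character inducing `χ₂`. Then the sum of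
`χ₂(b)` over units `b mod W` with `b ≡ n₁⁻¹ (mod q₁)` equals
`(φ(q₂)/φ(gcd(q₁,q₂)))·χ̃₂(n₁⁻¹)` if `q̃₂ ∣ gcd(q₁, q₂)`, and `0` otherwise. -/
theorem stmt_15 (q₁ q₂ W : ℕ) [NeZero q₁] [NeZero q₂] [NeZero W]
    (hW : W = Nat.lcm q₁ q₂) (h₁ : q₁ ∣ W) (h₂ : q₂ ∣ W)
    (χ₂ : DirichletCharacter ℂ q₂) (n₁ : (ZMod q₁)ˣ) :
    (∑ b ∈ Finset.univ.filter
        (fun b : (ZMod W)ˣ =>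
          ZMod.castHom h₁ (ZMod q₁) (b : ZMod W) = ((n₁⁻¹ : (ZMod q₁)ˣ) : ZMod q₁)),
        (changeLevel h₂ χ₂) (b : ZMod W))
      = if h : χ₂.conductor ∣ Nat.gcd q₁ q₂ then
          ((q₂.totient / (Nat.gcd q₁ q₂).totient : ℕ) : ℂ) *
            χ₂.primitiveCharacter
              (ZMod.castHom (h.trans (Nat.gcd_dvd_left q₁ q₂)) (ZMod χ₂.conductor)
                ((n₁⁻¹ : (ZMod q₁)ˣ) : ZMod q₁))
        else 0 := by
  classical
  have hgq₂ : Nat.gcd q₁ q₂ ∣ q₂ := Nat.gcd_dvd_right _ _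
  set f : (ZMod W)ˣ →* (ZMod q₁)ˣ := ZMod.unitsMap h₁ with hf
  have hcoe : ∀ b : (ZMod W)ˣ,
      ((f b : (ZMod q₁)ˣ) : ZMod q₁) = ZMod.castHom h₁ (ZMod q₁) (b : ZMod W) := fun b => rfl
  have hset : (Finset.univ.filter
        (fun b : (ZMod W)ˣ =>
          ZMod.castHom h₁ (ZMod q₁) (b : ZMod W) = ((n₁⁻¹ : (ZMod q₁)ˣ) : ZMod q₁)))
      = Finset.univ.filter (fun b : (ZMod W)ˣ => f b = n₁⁻¹) := by
    apply Finset.filter_congr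
    intro b _
    rw [← hcoe b]
    exact Units.ext_iff.symm
  rw [hset]
  by_cases hc : χ₂.conductor ∣ Nat.gcd q₁ q₂
  · rw [dif_pos hc]
    have hcq₁ : χ₂.conductor ∣ q₁ := hc.trans (Nat.gcd_dvd_left q₁ q₂)
    have hχ : changeLevel h₂ χ₂
        = changeLevel h₁ (changeLevel hcq₁ χ₂.primitiveCharacter) := by
      conv_lhs => rw [my_eq_changeLevel χ₂]
      rw [← changeLevel_trans, ← changeLevel_trans]
    have hterm : ∀ b ∈ Finset.univ.filter (fun b : (ZMod W)ˣ => f b = n₁⁻¹),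
        changeLevel h₂ χ₂ (b : ZMod W)
          = χ₂.primitiveCharacter
              (ZMod.castHom (hc.trans (Nat.gcd_dvd_left q₁ q₂)) (ZMod χ₂.conductor)
                ((n₁⁻¹ : (ZMod q₁)ˣ) : ZMod q₁)) := by
      intro b hb
      rw [Finset.mem_filter] at hb
      have hcast : (ZMod.cast ((b : (ZMod W)ˣ) : ZMod W) : ZMod q₁)
          = ((n₁⁻¹ : (ZMod q₁)ˣ) : ZMod q₁) := by
        rw [← ZMod.castHom_apply (h := h₁), ← hcoe b, hb.2]
      rw [hχ, changeLevel_eq_cast_of_dvd, hcast, changeLevel_eq_cast_of_dvd,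
        ZMod.castHom_apply]
    rw [Finset.sum_congr rfl hterm, Finset.sum_const, nsmul_eq_mul]
    congr 2
    -- card = q₂.totient / gcd.totient
    have hsurj : Function.Surjective f := ZMod.unitsMap_surjective h₁
    have h := fiber_card f hsurj n₁⁻¹
    rw [ZMod.card_units_eq_totient, ZMod.card_units_eq_totient] at h
    have htot : W.totient * (Nat.gcd q₁ q₂).totient = q₁.totient * q₂.totient := by
      rw [hW]; exact tot_lcm_gcd q₁ q₂ (NeZero.ne q₁) (NeZero.ne q₂)
    have hq1pos : 0 < q₁.totient :=
      Nat.totient_pos.mpr (Nat.pos_of_ne_zero (NeZero.ne q₁))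
    have hgpos : 0 < (Nat.gcd q₁ q₂).totient :=
      Nat.totient_pos.mpr (Nat.gcd_pos_of_pos_left _ (Nat.pos_of_ne_zero (NeZero.ne q₁)))
    have hkey : q₂.totient
        = (Finset.univ.filter (fun b : (ZMod W)ˣ => f b = n₁⁻¹)).card
            * (Nat.gcd q₁ q₂).totient := by
      apply Nat.eq_of_mul_eq_mul_left hq1pos
      calc q₁.totient * q₂.totient = W.totient * (Nat.gcd q₁ q₂).totient := htot.symm
        _ = ((Finset.univ.filter (fun b : (ZMod W)ˣ => f b = n₁⁻¹)).card * q₁.totient)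
              * (Nat.gcd q₁ q₂).totient := by rw [h]
        _ = q₁.totient * ((Finset.univ.filter (fun b : (ZMod W)ˣ => f b = n₁⁻¹)).card
              * (Nat.gcd q₁ q₂).totient) := by ring
    exact (Nat.div_eq_of_eq_mul_left hgpos hkey).symm
  · rw [dif_neg hc]
    have hnft : ¬ FactorsThrough χ₂ (Nat.gcd q₁ q₂) :=
      fun h => hc (conductor_dvd_of_factorsThrough h)
    rw [factorsThrough_iff_ker_unitsMap hgq₂, SetLike.le_def] at hnft
    push_neg at hnft
    obtain ⟨u, hu1, hu2⟩ := hnft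
    rw [MonoidHom.mem_ker] at hu1
    rw [MonoidHom.mem_ker] at hu2
    obtain ⟨c, hc1, hc2⟩ := crt_lift h₁ h₂ u hu1
    set F := Finset.univ.filter (fun b : (ZMod W)ˣ => f b = n₁⁻¹) with hF
    set S := ∑ b ∈ F, changeLevel h₂ χ₂ ((b : (ZMod W)ˣ) : ZMod W) with hS
    have hval : changeLevel h₂ χ₂ ((c : ZMod W)) = χ₂ ((u : (ZMod q₂)ˣ) : ZMod q₂) := by
      rw [changeLevel_eq_cast_of_dvd]
      congr 1
      rw [← hc2]
      rw [ZMod.unitsMap_def]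
      simp only [Units.coe_map, MonoidHom.coe_coe]
      rw [ZMod.castHom_apply]
    have hre : (∑ b ∈ F, changeLevel h₂ χ₂ (((c * b : (ZMod W)ˣ) : ZMod W))) = S := by
      refine Finset.sum_nbij' (fun b => c * b) (fun b => c⁻¹ * b) ?_ ?_ ?_ ?_ ?_
      · intro a ha
        rw [hF, Finset.mem_filter] at ha ⊢
        refine ⟨Finset.mem_univ _, ?_⟩
        rw [map_mul]
        rw [show f c = 1 from hc1, one_mul, ha.2]
      · intro a ha
        rw [hF, Finset.mem_filter] at ha ⊢
        refine ⟨Finset.mem_univ _, ?_⟩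
        rw [map_mul, map_inv]
        rw [show f c = 1 from hc1, inv_one, one_mul, ha.2]
      · intro a _; group
      · intro a _; group
      · intro a _; rfl
    have hSS : χ₂ ((u : (ZMod q₂)ˣ) : ZMod q₂) * S = S := by
      calc χ₂ ((u : (ZMod q₂)ˣ) : ZMod q₂) * S
          = ∑ b ∈ F, χ₂ ((u : (ZMod q₂)ˣ) : ZMod q₂)
              * changeLevel h₂ χ₂ ((b : (ZMod W)ˣ) : ZMod W) := by
            rw [hS, Finset.mul_sum]
        _ = ∑ b ∈ F, changeLevel h₂ χ₂ (((c * b : (ZMod W)ˣ) : ZMod W)) := by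
            refine Finset.sum_congr rfl fun b _ => ?_
            rw [Units.val_mul, map_mul, hval]
        _ = S := hre
    have hne : χ₂ ((u : (ZMod q₂)ˣ) : ZMod q₂) ≠ 1 := by
      intro h
      apply hu2
      have hcoeu := MulChar.coe_toUnitHom χ₂ u
      exact Units.ext (by rw [hcoeu, h]; rfl)
    have hz : (χ₂ ((u : (ZMod q₂)ˣ) : ZMod q₂) - 1) * S = 0 := by
      rw [sub_mul, one_mul, hSS, sub_self]
    rcases mul_eq_zero.mp hz with h | h
    · exact absurd (sub_eq_zero.mp h) hne
    · exact h
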